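/- For positive integers n₁, ..., n_k with n₁ + ... + n_k + 1 = n and the piecewise uniform measure P with density (3/2)^j on J_j = [1 - 1/3^(j-1), 1 - 2/3^j], the distortion of the set α = ∪_{j=1}^k {J_j(0) + ((2i-1)/(2n_j))·3^(-j) : 1 ≤ i ≤ n_j} ∪ {1 - 1/(2·3^k)} equals ∑_{j=1}^k (1/n_j²)·(1/12)·18^(-j) + (25/204)·18^(-k). -/

import Mathlib

open MeasureTheory Set

/-- The interval `J n = [1 - 1/3^(n-1), 1 - 2/3^n]`. -/
noncomputable def J (n : ℕ) : Set ℝ := Set.Icc (1 - 1 / 3 ^ (n - 1)) (1 - 2 / 3 ^ n)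

/-- The piecewise constant density: `(3/2)^n` on `J n` for `n ≥ 1`, `0` elsewhere. -/
noncomputable def f (x : ℝ) : ℝ :=
  ∑' n : ℕ, Set.indicator (J (n + 1)) (fun _ => ((3 : ℝ) / 2) ^ (n + 1)) x

/-- The piecewise uniform probability measure on `ℝ` with density `f`. -/
noncomputable def P : Measure ℝ :=
  MeasureTheory.volume.withDensity (fun x => ENNReal.ofReal (f x))

namespace S9

noncomputable def c (k : ℕ) : ℝ := 1 - 1 / (2 * 3 ^ k)

noncomputable def pt (nj : ℕ → ℕ) (j i : ℕ) : ℝ :=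
  (1 - 1 / 3 ^ (j - 1)) + (2 * (i : ℝ) - 1) / (2 * nj j) * (1 / 3 ^ j)

noncomputable def w (nj : ℕ → ℕ) (j : ℕ) : ℝ := (1 / 3 ^ j) / (nj j)

noncomputable def F (k : ℕ) (nj : ℕ → ℕ) : Finset ℝ :=
  ((Finset.Icc 1 k).biUnion fun j => (Finset.Icc 1 (nj j)).image (pt nj j)) ∪ {c k}

noncomputable def g (k : ℕ) (nj : ℕ → ℕ) (x : ℝ) : ℝ :=
  sInf ((fun a => (x - a) ^ 2) '' (F k nj : Set ℝ))

lemma mem_F {k : ℕ} {nj : ℕ → ℕ} {a : ℝ} :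
    a ∈ F k nj ↔ (∃ j, (1 ≤ j ∧ j ≤ k) ∧ ∃ i, (1 ≤ i ∧ i ≤ nj j) ∧ pt nj j i = a) ∨ a = c k := by
  simp [F, Finset.mem_union, Finset.mem_biUnion, Finset.mem_image, Finset.mem_Icc]
  exact or_comm

lemma S_eq (k : ℕ) (nj : ℕ → ℕ) :
    ((⋃ j ∈ Finset.Icc 1 k,
        {y : ℝ | ∃ i ∈ Finset.Icc 1 (nj j),
          y = (1 - 1 / 3 ^ (j - 1)) + (2 * (i : ℝ) - 1) / (2 * nj j) * (1 / 3 ^ j)}) ∪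
      {1 - 1 / (2 * 3 ^ k)}) = (F k nj : Set ℝ) := by
  ext a
  simp only [F, Finset.coe_union, Finset.coe_biUnion, Finset.coe_image, Finset.coe_singleton,
    Set.mem_union, Set.mem_iUnion, Set.mem_image, Set.mem_setOf_eq, Finset.mem_coe,
    Finset.mem_Icc, Set.mem_singleton_iff, pt, c]
  constructor
  · rintro (⟨j, hj, i, hi, rfl⟩ | rfl)
    · exact Or.inl ⟨j, hj, i, hi, rfl⟩
    · exact Or.inr rfl
  · rintro (⟨j, hj, i, hi, rfl⟩ | rfl)
    · exact Or.inl ⟨j, hj, i, hi, rfl⟩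
    · exact Or.inr rfl

lemma F_nonempty (k : ℕ) (nj : ℕ → ℕ) : (F k nj).Nonempty :=
  ⟨c k, mem_F.2 (Or.inr rfl)⟩

lemma g_eq_inf' (k : ℕ) (nj : ℕ → ℕ) (x : ℝ) :
    g k nj x = (F k nj).inf' (F_nonempty k nj) (fun a => (x - a) ^ 2) := by
  rw [g, ← Finset.inf'_eq_csInf_image]

lemma g_continuous (k : ℕ) (nj : ℕ → ℕ) : Continuous (g k nj) := by
  have : ∀ x : ℝ, ContinuousAt (g k nj) x := by
    intro x
    have : ContinuousAt (fun y => (F k nj).inf' (F_nonempty k nj) (fun a => (y - a) ^ 2)) x :=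
      ContinuousAt.finset_inf'_apply (F_nonempty k nj)
        (fun a _ => ((continuous_id.sub continuous_const).pow 2).continuousAt)
    exact this.congr (Filter.EventuallyEq.of_eq (funext fun y => (g_eq_inf' k nj y).symm))
  exact continuous_iff_continuousAt.2 this

lemma g_nonneg (k : ℕ) (nj : ℕ → ℕ) (x : ℝ) : 0 ≤ g k nj x := by
  refine le_csInf ((F_nonempty k nj).to_set.image _) ?_
  rintro b ⟨a, _, rfl⟩; positivity


lemma d2 (e : ℕ) : (2:ℝ)/3^e = 2*(1/3^e) := by ring
lemma dhalf (e : ℕ) : (1:ℝ)/(2*3^e) = (1/2)*(1/3^e) := by ring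
lemma dsucc (e : ℕ) : (1:ℝ)/3^e = 3*(1/3^(e+1)) := by rw [pow_succ]; field_simp

lemma sq_le_sq_abs {u v : ℝ} (h : |u| ≤ |v|) : u ^ 2 ≤ v ^ 2 := by
  rw [← sq_abs u, ← sq_abs v]; exact pow_le_pow_left₀ (abs_nonneg u) h 2

lemma pt_lin (nj : ℕ → ℕ) {m : ℕ} (hN : (nj (m+1) : ℝ) ≠ 0) (i : ℕ) :
    pt nj (m+1) i = (1 - 1/3^m) + ((i:ℝ) - 1/2) * w nj (m+1) := by
  simp only [pt, w, Nat.add_sub_cancel]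
  field_simp

lemma w_pos {nj : ℕ → ℕ} {j : ℕ} (hN : 0 < nj j) : 0 < w nj j := by
  have : (0:ℝ) < nj j := by exact_mod_cast hN
  rw [w]; positivity

lemma NW {nj : ℕ → ℕ} {j : ℕ} (hN : 0 < nj j) : (nj j : ℝ) * w nj j = 1/3^j := by
  have : (nj j:ℝ) ≠ 0 := by exact_mod_cast hN.ne'
  rw [w]; field_simp

lemma w_le {nj : ℕ → ℕ} {j : ℕ} (hN : 0 < nj j) : w nj j ≤ 1/3^j := by
  have h1 : (1:ℝ) ≤ nj j := by exact_mod_cast hN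
  have h2 := w_pos hN
  nlinarith [NW hN]

lemma pt_bounds (nj : ℕ → ℕ) {m' i' : ℕ} (hN : 0 < nj (m'+1)) (h1 : 1 ≤ i') (h2 : i' ≤ nj (m'+1)) :
    (1 - 1/3^m' : ℝ) < pt nj (m'+1) i' ∧ pt nj (m'+1) i' < 1 - 2/3^(m'+1) := by
  have hN0 : (nj (m'+1):ℝ) ≠ 0 := by exact_mod_cast hN.ne'
  have hW := w_pos hN
  have hNW := NW hN
  have hi1 : (1:ℝ) ≤ i' := by exact_mod_cast h1
  have hi2 : (i':ℝ) ≤ nj (m'+1) := by exact_mod_cast h2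
  rw [pt_lin nj hN0, dsucc m', d2 (m'+1)]
  constructor
  · have := mul_le_mul_of_nonneg_right (show (1:ℝ)/2 ≤ (i':ℝ) - 1/2 by linarith) hW.le
    linarith
  · have := mul_le_mul_of_nonneg_right hi2 hW.le
    linarith

lemma g_eq_inner {k : ℕ} {nj : ℕ → ℕ} (hpos : ∀ j ∈ Finset.Icc 1 k, 0 < nj j)
    {m i : ℕ} (hjk : m + 1 ≤ k) (hi1 : 1 ≤ i) (hin : i ≤ nj (m+1))
    {x : ℝ} (hx1 : (1 - 1/3^m) + ((i:ℝ) - 1) * w nj (m+1) ≤ x)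
    (hx2 : x ≤ (1 - 1/3^m) + (i:ℝ) * w nj (m+1)) :
    g k nj x = (x - pt nj (m+1) i) ^ 2 := by
  have hNpos := hpos (m+1) (Finset.mem_Icc.2 ⟨Nat.le_add_left 1 m, hjk⟩)
  have hN0 : (nj (m+1):ℝ) ≠ 0 := by exact_mod_cast hNpos.ne'
  have hN1 : (1:ℝ) ≤ nj (m+1) := by exact_mod_cast hNpos
  have hW0 : 0 < w nj (m+1) := w_pos hNpos
  have hNW := NW hNpos
  have hWle : w nj (m+1) ≤ 1/3^(m+1) := w_le hNpos
  have hiR : (1:ℝ) ≤ i := by exact_mod_cast hi1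
  have hiN : (i:ℝ) ≤ nj (m+1) := by exact_mod_cast hin
  have h3 : (1:ℝ)/3^m = 3*(1/3^(m+1)) := dsucc m
  set W := w nj (m+1) with hWdef
  have hdist : |x - pt nj (m+1) i| ≤ W/2 := by
    rw [pt_lin nj hN0, abs_le]
    constructor <;> linarith
  have hxl : 1 - 1/3^m ≤ x := by
    have : 0 ≤ ((i:ℝ) - 1) * W := mul_nonneg (by linarith) hW0.le
    linarith
  have hxr : x ≤ 1 - 2*(1/3^(m+1)) := by
    have := mul_le_mul_of_nonneg_right hiN hW0.le
    linarith
  rw [g]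
  refine IsLeast.csInf_eq ⟨⟨pt nj (m+1) i, ?_, rfl⟩, ?_⟩
  · exact mem_F.2 (Or.inl ⟨m+1, ⟨Nat.le_add_left 1 m, hjk⟩, i, ⟨hi1, hin⟩, rfl⟩)
  · rintro b ⟨a, ha, rfl⟩
    apply sq_le_sq_abs
    have habs : ∀ u : ℝ, W/2 ≤ x - u ∨ W/2 ≤ u - x → W/2 ≤ |x - u| := by
      rintro u (h | h)
      · exact le_trans h (le_abs_self _)
      · exact le_trans h (by rw [abs_sub_comm]; exact le_abs_self _)
    rcases mem_F.1 ha with ⟨j', ⟨hj'1, hj'k⟩, i', ⟨hi'1, hi'n⟩, rfl⟩ | rfl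
    · obtain ⟨m', rfl⟩ : ∃ m', j' = m' + 1 :=
        ⟨j' - 1, (Nat.succ_pred_eq_of_pos hj'1).symm⟩
      have hN'pos := hpos (m'+1) (Finset.mem_Icc.2 ⟨hj'1, hj'k⟩)
      have hN'0 : (nj (m'+1):ℝ) ≠ 0 := by exact_mod_cast hN'pos.ne'
      have hb1 := (pt_bounds nj hN'pos hi'1 hi'n).1
      have hb2 := (pt_bounds nj hN'pos hi'1 hi'n).2
      rw [d2] at hb2
      rcases lt_trichotomy m' m with hlt | heq | hgt
      · have e : (1:ℝ)/3^m ≤ 1/3^(m'+1) := by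
          apply one_div_le_one_div_of_le (by positivity)
          exact pow_le_pow_right₀ (by norm_num) (by omega)
        refine le_trans hdist (habs _ (Or.inl ?_))
        linarith
      · subst heq
        rcases lt_trichotomy i' i with hilt | hieq | higt
        · have hii : (i':ℝ) + 1 ≤ (i:ℝ) := by exact_mod_cast hilt
          refine le_trans hdist (habs _ (Or.inl ?_))
          rw [pt_lin nj hN0]
          have := mul_le_mul_of_nonneg_right (show (i':ℝ) ≤ (i:ℝ) - 1 by linarith) hW0.le
          linarith
        · subst hieq
          exact le_refl _
        · have hii : (i:ℝ) + 1 ≤ (i':ℝ) := by exact_mod_cast higt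
          refine le_trans hdist (habs _ (Or.inr ?_))
          rw [pt_lin nj hN0]
          have := mul_le_mul_of_nonneg_right (show (i:ℝ) + 1/2 ≤ (i':ℝ) - 1/2 by linarith) hW0.le
          linarith
      · have hmono : (1:ℝ)/3^m' ≤ 1/3^(m+1) := by
          apply one_div_le_one_div_of_le (by positivity)
          exact pow_le_pow_right₀ (by norm_num) (by omega)
        refine le_trans hdist (habs _ (Or.inr ?_))
        linarith
    · have hck : (1:ℝ)/3^k ≤ 1/3^(m+1) := by
        apply one_div_le_one_div_of_le (by positivity)
        exact pow_le_pow_right₀ (by norm_num) hjk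
      refine le_trans hdist (habs _ (Or.inr ?_))
      rw [c, dhalf]
      linarith

lemma g_eq_tail {k : ℕ} {nj : ℕ → ℕ} (hpos : ∀ j ∈ Finset.Icc 1 k, 0 < nj j)
    {j : ℕ} (hj : k + 1 ≤ j) {x : ℝ} (hx : x ∈ J j) :
    g k nj x = (x - c k) ^ 2 := by
  obtain ⟨hx1, hx2⟩ := hx
  rw [d2] at hx2
  have hj1 : (1:ℝ)/3^(j-1) ≤ 1/3^k := by
    apply one_div_le_one_div_of_le (by positivity)
    exact pow_le_pow_right₀ (by norm_num) (by omega)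
  have hj2 : (0:ℝ) ≤ 1/3^j := by positivity
  have hdist : |x - c k| ≤ (1/2)*(1/3^k) := by
    rw [c, dhalf, abs_le]
    constructor
    · linarith
    · linarith
  rw [g]
  refine IsLeast.csInf_eq ⟨⟨c k, mem_F.2 (Or.inr rfl), rfl⟩, ?_⟩
  rintro b ⟨a, ha, rfl⟩
  apply sq_le_sq_abs
  rcases mem_F.1 ha with ⟨j', ⟨hj'1, hj'k⟩, i', ⟨hi'1, hi'n⟩, rfl⟩ | rfl
  · obtain ⟨m', rfl⟩ : ∃ m', j' = m' + 1 :=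
      ⟨j' - 1, (Nat.succ_pred_eq_of_pos hj'1).symm⟩
    have hN'pos := hpos (m'+1) (Finset.mem_Icc.2 ⟨hj'1, hj'k⟩)
    have hb2 := (pt_bounds nj hN'pos hi'1 hi'n).2
    rw [d2] at hb2
    have hmono : (1:ℝ)/3^k ≤ 1/3^(m'+1) := by
      apply one_div_le_one_div_of_le (by positivity)
      exact pow_le_pow_right₀ (by norm_num) hj'k
    have hfar : (1/2)*(1/3^k) ≤ x - pt nj (m'+1) i' := by linarith
    calc |x - c k| ≤ (1/2)*(1/3^k) := hdist
      _ ≤ x - pt nj (m'+1) i' := hfar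
      _ ≤ |x - pt nj (m'+1) i'| := le_abs_self _
  · exact le_refl _




lemma sq_integral (p a b : ℝ) :
    ∫ x in a..b, (x - p)^2 = ((b - p)^3 - (a - p)^3)/3 := by
  have h := intervalIntegral.integral_comp_sub_right (fun y : ℝ => y^2) p (a := a) (b := b)
  rw [h, integral_pow]
  norm_num

lemma integral_J_inner {k : ℕ} {nj : ℕ → ℕ} (hpos : ∀ j ∈ Finset.Icc 1 k, 0 < nj j)
    {m : ℕ} (hjk : m + 1 ≤ k) :
    ∫ x in J (m+1), g k nj x = 1/(12 * (nj (m+1):ℝ)^2 * 27^(m+1)) := by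
  have hNpos := hpos (m+1) (Finset.mem_Icc.2 ⟨Nat.le_add_left 1 m, hjk⟩)
  have hN0 : (nj (m+1):ℝ) ≠ 0 := by exact_mod_cast hNpos.ne'
  have hW0 : 0 < w nj (m+1) := w_pos hNpos
  have hNW := NW hNpos
  set W := w nj (m+1) with hWdef
  set N := nj (m+1) with hNdef
  have hJ : J (m+1) = Set.Icc (1 - 1/3^m) (1 - 2/3^(m+1)) := by
    simp [J, Nat.add_sub_cancel]
  have h3 : (1:ℝ)/3^m = 3*(1/3^(m+1)) := dsucc m
  have h30 : (0:ℝ) < 1/3^(m+1) := by positivity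
  have hle : (1:ℝ) - 1/3^m ≤ 1 - 2/3^(m+1) := by rw [d2]; linarith
  set φ : ℕ → ℝ := fun i => (1 - 1/3^m) + i * W with hφ
  have hφ0 : φ 0 = 1 - 1/3^m := by simp [hφ]
  have hφN : φ N = 1 - 2/3^(m+1) := by
    simp only [hφ]
    rw [d2]
    linarith
  have hmono : ∀ i : ℕ, φ i ≤ φ (i+1) := by
    intro i
    simp only [hφ]
    push_cast
    nlinarith
  have heach : ∀ i ∈ Finset.range N, (∫ x in φ i..φ (i+1), g k nj x) = W^3/12 := by
    intro i hi
    have hiN : i + 1 ≤ N := Finset.mem_range.1 hi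
    have hcong : Set.EqOn (g k nj) (fun x => (x - pt nj (m+1) (i+1))^2)
        (Set.uIcc (φ i) (φ (i+1))) := by
      rw [Set.uIcc_of_le (hmono i)]
      intro x hx
      refine g_eq_inner hpos hjk (Nat.le_add_left 1 i) hiN ?_ ?_
      · have := hx.1
        simp only [hφ] at this
        push_cast
        push_cast at this
        linarith
      · have := hx.2
        simp only [hφ] at this
        push_cast
        push_cast at this
        linarith
    rw [intervalIntegral.integral_congr hcong, sq_integral]
    have hp : pt nj (m+1) (i+1) = (1 - 1/3^m) + (((i:ℝ)+1) - 1/2) * W := by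
      rw [pt_lin nj hN0]
      push_cast
      ring
    have e1 : φ (i+1) - pt nj (m+1) (i+1) = W/2 := by
      simp only [hφ, hp]; push_cast; ring
    have e2 : φ i - pt nj (m+1) (i+1) = -(W/2) := by
      simp only [hφ, hp]; push_cast; ring
    rw [e1, e2]
    ring
  have hint : ∀ i, i < N → IntervalIntegrable (g k nj) volume (φ i) (φ (i+1)) :=
    fun i _ => (g_continuous k nj).intervalIntegrable _ _
  have hsum := intervalIntegral.sum_integral_adjacent_intervals (μ := volume)
    (a := φ) (n := N) hint
  rw [hJ, MeasureTheory.integral_Icc_eq_integral_Ioc,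
      ← intervalIntegral.integral_of_le hle, ← hφ0, ← hφN, ← hsum,
      Finset.sum_congr rfl heach, Finset.sum_const, Finset.card_range, nsmul_eq_mul]
  have h27 : (27:ℝ)^(m+1) = (3^(m+1))^3 := by
    rw [show (27:ℝ) = 3^3 by norm_num, ← pow_mul, ← pow_mul, Nat.mul_comm]
  have h3pos : (0:ℝ) < 3^(m+1) := by positivity
  rw [hWdef, w, h27]
  rw [← hNdef]
  field_simp

lemma integral_J_tail {k : ℕ} {nj : ℕ → ℕ} (hpos : ∀ j ∈ Finset.Icc 1 k, 0 < nj j)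
    {m : ℕ} (hj : k + 1 ≤ m + 1) :
    ∫ x in J (m+1), g k nj x
      = (((1 - 2/3^(m+1)) - c k)^3 - ((1 - 1/3^m) - c k)^3)/3 := by
  have hJ : J (m+1) = Set.Icc (1 - 1/3^m) (1 - 2/3^(m+1)) := by
    simp [J, Nat.add_sub_cancel]
  have h3 : (1:ℝ)/3^m = 3*(1/3^(m+1)) := dsucc m
  have h30 : (0:ℝ) < 1/3^(m+1) := by positivity
  have hle : (1:ℝ) - 1/3^m ≤ 1 - 2/3^(m+1) := by rw [d2]; linarith
  have hcong : Set.EqOn (g k nj) (fun x => (x - c k)^2) (J (m+1)) := by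
    intro x hx
    exact g_eq_tail hpos hj hx
  rw [setIntegral_congr_fun (hJ ▸ measurableSet_Icc) hcong, hJ,
      MeasureTheory.integral_Icc_eq_integral_Ioc, ← intervalIntegral.integral_of_le hle,
      sq_integral]




lemma t_inner {k : ℕ} {nj : ℕ → ℕ} (hpos : ∀ j ∈ Finset.Icc 1 k, 0 < nj j)
    {m : ℕ} (hm : m + 1 ≤ k) :
    (3/2:ℝ)^(m+1) * ∫ x in J (m+1), g k nj x
      = (1/(nj (m+1):ℝ)^2) * (1/12) * (1/18^(m+1)) := by
  rw [integral_J_inner hpos hm]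
  have hN0 : (nj (m+1):ℝ) ≠ 0 := by
    exact_mod_cast (hpos (m+1) (Finset.mem_Icc.2 ⟨Nat.le_add_left 1 m, hm⟩)).ne'
  have e27 : (27:ℝ)^(m+1) = 3^(m+1)*(3^(m+1)*3^(m+1)) := by
    rw [show (27:ℝ) = 3*(3*3) by norm_num, mul_pow, mul_pow]
  have e18 : (18:ℝ)^(m+1) = 2^(m+1)*(3^(m+1)*3^(m+1)) := by
    rw [show (18:ℝ) = 2*(3*3) by norm_num, mul_pow, mul_pow]
  have h2 : (0:ℝ) < 2^(m+1) := by positivity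
  have h3 : (0:ℝ) < 3^(m+1) := by positivity
  rw [e27, e18, div_pow]
  field_simp

lemma t_tail {k : ℕ} {nj : ℕ → ℕ} (hpos : ∀ j ∈ Finset.Icc 1 k, 0 < nj j) (m : ℕ) :
    (3/2:ℝ)^(k+m+1) * ∫ x in J (k+m+1), g k nj x
      = ((1/8)*(1/2)^m - (5/12)*(1/6)^m + (19/54)*(1/18)^m) * (1/18^k) := by
  have h := integral_J_tail (k := k) (nj := nj) hpos (m := k + m) (by omega)
  rw [show k+m+1 = (k+m)+1 from rfl, h, c]
  have h2k : (0:ℝ) < 2^k := by positivity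
  have h3k : (0:ℝ) < 3^k := by positivity
  have h2m : (0:ℝ) < 2^m := by positivity
  have h3m : (0:ℝ) < 3^m := by positivity
  have e1 : (3:ℝ)^(k+m+1) = 3^k*3^m*3 := by rw [pow_add, pow_add, pow_one]
  have e2 : (2:ℝ)^(k+m+1) = 2^k*2^m*2 := by rw [pow_add, pow_add, pow_one]
  have e3 : (3:ℝ)^(k+m) = 3^k*3^m := by rw [pow_add]
  have e6 : ((1:ℝ)/6)^m = 1/(2^m*3^m) := by
    rw [div_pow, one_pow, show (6:ℝ) = 2*3 by norm_num, mul_pow]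
  have e18 : ((1:ℝ)/18)^m = 1/(2^m*(3^m*3^m)) := by
    rw [div_pow, one_pow, show (18:ℝ) = 2*(3*3) by norm_num, mul_pow, mul_pow]
  have e18k : (18:ℝ)^k = 2^k*(3^k*3^k) := by
    rw [show (18:ℝ) = 2*(3*3) by norm_num, mul_pow, mul_pow]
  have e12 : ((1:ℝ)/2)^m = 1/2^m := by rw [div_pow, one_pow]
  rw [div_pow, e1, e2, e3, e6, e18, e18k, e12]
  field_simp
  ring




lemma J_meas (j : ℕ) : MeasurableSet (J j) := measurableSet_Icc

lemma J_unique {a b : ℕ} {x : ℝ} (ha : x ∈ J (a+1)) (hb : x ∈ J (b+1)) : a = b := by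
  have key : ∀ {a b : ℕ} {x : ℝ}, a < b → x ∈ J (a+1) → x ∈ J (b+1) → False := by
    intro a b x hab h1 h2
    simp only [J, Set.mem_Icc, Nat.add_sub_cancel] at h1 h2
    have hm : (1:ℝ)/3^b ≤ 1/3^(a+1) :=
      one_div_le_one_div_of_le (by positivity) (pow_le_pow_right₀ (by norm_num) (by omega))
    have h0 : (0:ℝ) < 1/3^(a+1) := by positivity
    have h12 := h1.2
    rw [d2] at h12
    linarith [h2.1]
  rcases lt_trichotomy a b with h | h | h
  · exact absurd (key h ha hb) (by simp)
  · exact h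
  · exact absurd (key h hb ha) (by simp)

lemma ofReal_f_eq (x : ℝ) :
    ENNReal.ofReal (f x)
      = ∑' m : ℕ, (J (m+1)).indicator (fun _ => ENNReal.ofReal ((3/2:ℝ)^(m+1))) x := by
  by_cases hx : ∃ m, x ∈ J (m+1)
  · obtain ⟨m₀, hm₀⟩ := hx
    have huniq : ∀ b : ℕ, b ≠ m₀ → x ∉ J (b+1) := fun b hb hxb => hb (J_unique hxb hm₀)
    have hf : f x = (3/2:ℝ)^(m₀+1) := by
      rw [f, tsum_eq_single m₀ (fun b hb => Set.indicator_of_notMem (huniq b hb) _),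
        Set.indicator_of_mem hm₀]
    rw [hf, tsum_eq_single m₀ (fun b hb => Set.indicator_of_notMem (huniq b hb) _),
      Set.indicator_of_mem hm₀]
  · push_neg at hx
    have hf : f x = 0 := by
      rw [f, tsum_congr (fun b => Set.indicator_of_notMem (hx b) _), tsum_zero]
    rw [hf, tsum_congr (fun b => Set.indicator_of_notMem (hx b) _), tsum_zero,
      ENNReal.ofReal_zero]

lemma measurable_ofReal_f : Measurable fun x => ENNReal.ofReal (f x) := by
  have : (fun x => ENNReal.ofReal (f x))
      = fun x => ∑' m : ℕ, (J (m+1)).indicator (fun _ => ENNReal.ofReal ((3/2:ℝ)^(m+1))) x :=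
    funext ofReal_f_eq
  rw [this]
  exact Measurable.ennreal_tsum fun m => measurable_const.indicator (J_meas (m+1))

lemma integrableOn_g (k : ℕ) (nj : ℕ → ℕ) (j : ℕ) : IntegrableOn (g k nj) (J j) volume :=
  (g_continuous k nj).integrableOn_Icc

lemma master (k : ℕ) (nj : ℕ → ℕ) :
    ∫⁻ x, ENNReal.ofReal (f x) * ENNReal.ofReal (g k nj x) ∂volume
      = ∑' m : ℕ, ENNReal.ofReal ((3/2:ℝ)^(m+1) * ∫ x in J (m+1), g k nj x) := by
  have hG : Measurable fun x => ENNReal.ofReal (g k nj x) :=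
    ENNReal.measurable_ofReal.comp (g_continuous k nj).measurable
  have step1 : (fun x => ENNReal.ofReal (f x) * ENNReal.ofReal (g k nj x))
      = fun x => ∑' m : ℕ, ((J (m+1)).indicator (fun _ => ENNReal.ofReal ((3/2:ℝ)^(m+1))) x
          * ENNReal.ofReal (g k nj x)) := by
    funext x
    rw [ofReal_f_eq x, ENNReal.tsum_mul_right]
  rw [step1, lintegral_tsum (f := fun m x => (J (m+1)).indicator (fun _ => ENNReal.ofReal ((3/2:ℝ)^(m+1))) x
        * ENNReal.ofReal (g k nj x)) (fun m =>
    ((measurable_const.indicator (J_meas (m+1))).mul hG).aemeasurable)]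
  congr 1
  funext m
  have hind : (fun x => (J (m+1)).indicator (fun _ => ENNReal.ofReal ((3/2:ℝ)^(m+1))) x
      * ENNReal.ofReal (g k nj x))
      = (J (m+1)).indicator (fun x => ENNReal.ofReal ((3/2:ℝ)^(m+1)) * ENNReal.ofReal (g k nj x)) := by
    funext x
    by_cases h : x ∈ J (m+1) <;> simp [h]
  rw [hind, lintegral_indicator (J_meas (m+1)),
    lintegral_const_mul _ hG,
    ← ofReal_integral_eq_lintegral_ofReal (integrableOn_g k nj (m+1))
      (ae_of_all _ (g_nonneg k nj)),
    ← ENNReal.ofReal_mul (by positivity)]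

lemma summable_tail (k : ℕ) :
    Summable (fun m : ℕ => ((1/8:ℝ)*(1/2)^m - (5/12)*(1/6)^m + (19/54)*(1/18)^m) * (1/18^k)) := by
  apply Summable.mul_right
  have s1 : Summable (fun m : ℕ => (1/2:ℝ)^m) :=
    summable_geometric_of_lt_one (by norm_num) (by norm_num)
  have s2 : Summable (fun m : ℕ => (1/6:ℝ)^m) :=
    summable_geometric_of_lt_one (by norm_num) (by norm_num)
  have s3 : Summable (fun m : ℕ => (1/18:ℝ)^m) :=
    summable_geometric_of_lt_one (by norm_num) (by norm_num)
  exact ((s1.mul_left _).sub (s2.mul_left _)).add (s3.mul_left _)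

lemma tsum_tail (k : ℕ) :
    ∑' m : ℕ, (((1/8:ℝ)*(1/2)^m - (5/12)*(1/6)^m + (19/54)*(1/18)^m) * (1/18^k))
      = (25/204) * (1/18^k) := by
  rw [tsum_mul_right]
  have s1 : Summable (fun m : ℕ => (1/2:ℝ)^m) :=
    summable_geometric_of_lt_one (by norm_num) (by norm_num)
  have s2 : Summable (fun m : ℕ => (1/6:ℝ)^m) :=
    summable_geometric_of_lt_one (by norm_num) (by norm_num)
  have s3 : Summable (fun m : ℕ => (1/18:ℝ)^m) :=
    summable_geometric_of_lt_one (by norm_num) (by norm_num)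
  rw [Summable.tsum_add ((s1.mul_left _).sub (s2.mul_left _)) (s3.mul_left _),
    Summable.tsum_sub (s1.mul_left _) (s2.mul_left _),
    tsum_mul_left, tsum_mul_left, tsum_mul_left,
    tsum_geometric_of_lt_one (by norm_num) (by norm_num),
    tsum_geometric_of_lt_one (by norm_num) (by norm_num),
    tsum_geometric_of_lt_one (by norm_num) (by norm_num)]
  norm_num

lemma summable_t {k : ℕ} {nj : ℕ → ℕ} (hpos : ∀ j ∈ Finset.Icc 1 k, 0 < nj j) :
    Summable (fun m : ℕ => (3/2:ℝ)^(m+1) * ∫ x in J (m+1), g k nj x) := by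
  rw [← summable_nat_add_iff k]
  have heq : (fun m : ℕ => (3/2:ℝ)^((m+k)+1) * ∫ x in J ((m+k)+1), g k nj x)
      = fun m : ℕ => ((1/8:ℝ)*(1/2)^m - (5/12)*(1/6)^m + (19/54)*(1/18)^m) * (1/18^k) := by
    funext m
    rw [show m+k+1 = k+m+1 by omega]
    exact t_tail hpos m
  rw [heq]
  exact summable_tail k

lemma real_sum {k : ℕ} {nj : ℕ → ℕ} (hk : 1 ≤ k) (hpos : ∀ j ∈ Finset.Icc 1 k, 0 < nj j) :
    ∑' m : ℕ, ((3/2:ℝ)^(m+1) * ∫ x in J (m+1), g k nj x)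
      = (∑ j ∈ Finset.Icc 1 k, (1/(nj j:ℝ)^2) * (1/12) * (1/18^j)) + (25/204) * (1/18^k) := by
  rw [← Summable.sum_add_tsum_nat_add k (summable_t hpos)]
  congr 1
  · rw [← Finset.Ico_add_one_right_eq_Icc, Finset.sum_Ico_eq_sum_range]
    norm_num
    apply Finset.sum_congr rfl
    intro i hi
    rw [show 1+i = i+1 from Nat.add_comm 1 i]
    simpa using t_inner hpos (Nat.succ_le_of_lt (Finset.mem_range.1 hi))
  · have heq : (fun m : ℕ => (3/2:ℝ)^((m+k)+1) * ∫ x in J ((m+k)+1), g k nj x)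
        = fun m : ℕ => ((1/8:ℝ)*(1/2)^m - (5/12)*(1/6)^m + (19/54)*(1/18)^m) * (1/18^k) := by
      funext m
      rw [show m+k+1 = k+m+1 by omega]
      exact t_tail hpos m
    calc ∑' m : ℕ, ((3/2:ℝ)^((m+k)+1) * ∫ x in J ((m+k)+1), g k nj x)
        = ∑' m : ℕ, (((1/8:ℝ)*(1/2)^m - (5/12)*(1/6)^m + (19/54)*(1/18)^m) * (1/18^k)) := by
          rw [heq]
      _ = (25/204) * (1/18^k) := tsum_tail k




end S9


theorem stmt_9 (k : ℕ) (hk : 1 ≤ k) (nj : ℕ → ℕ) (hpos : ∀ j ∈ Finset.Icc 1 k, 0 < nj j)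
    (n : ℕ) (hn : n = (∑ j ∈ Finset.Icc 1 k, nj j) + 1) :
    (∫ x, sInf ((fun a => (x - a) ^ 2) ''
        ((⋃ j ∈ Finset.Icc 1 k,
            {y : ℝ | ∃ i ∈ Finset.Icc 1 (nj j),
              y = (1 - 1 / 3 ^ (j - 1)) + (2 * (i : ℝ) - 1) / (2 * nj j) * (1 / 3 ^ j)}) ∪
          {1 - 1 / (2 * 3 ^ k)})) ∂P) =
      (∑ j ∈ Finset.Icc 1 k, (1 / (nj j : ℝ) ^ 2) * (1 / 12) * (1 / 18 ^ j)) +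
        (25 / 204) * (1 / 18 ^ k) := by
  rw [S9.S_eq k nj]
  have hintegrand : (∫ x, sInf ((fun a => (x - a) ^ 2) '' ((S9.F k nj : Set ℝ))) ∂P)
      = ∫ x, S9.g k nj x ∂P := rfl
  rw [hintegrand,
    integral_eq_lintegral_of_nonneg_ae (ae_of_all _ (S9.g_nonneg k nj))
      (S9.g_continuous k nj).aestronglyMeasurable]
  rw [P, lintegral_withDensity_eq_lintegral_mul _ S9.measurable_ofReal_f
    (show Measurable fun a => ENNReal.ofReal (S9.g k nj a) from
      ENNReal.measurable_ofReal.comp (S9.g_continuous k nj).measurable)]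
  simp only [Pi.mul_apply]
  rw [S9.master k nj,
    ← ENNReal.ofReal_tsum_of_nonneg
      (fun m => mul_nonneg (by positivity)
        (setIntegral_nonneg (S9.J_meas (m+1)) (fun x _ => S9.g_nonneg k nj x)))
      (S9.summable_t hpos),
    S9.real_sum hk hpos, ENNReal.toReal_ofReal]
  have h1 : (0:ℝ) ≤ ∑ j ∈ Finset.Icc 1 k, (1 / (nj j : ℝ) ^ 2) * (1 / 12) * (1 / 18 ^ j) :=
    Finset.sum_nonneg fun j _ => by positivity
  have h2 : (0:ℝ) ≤ (25 / 204) * (1 / 18 ^ k) := by positivity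
  linarith
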